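/- Define A_{k,n}(q) = ∑_{i=0}^{k-1} (-1)^i * C(n,i) * q^{-(k-i)^2} * ([i-k]^i * [k-i+1]^{n-i} - [i-k+1]^i * [k-i]^{n-i}), where [m] denotes (1-q^m)/(1-q) as a rational function (for possibly negative m interpreted formally). Then A_{k,n}(-1) evaluates so that ∑_{k=1}^n A_{k,n}(-1) = n, i.e., A_{k,n}(-1) = 1 for each 1 ≤ k ≤ n. -/

import Mathlib

/-- The `q`-integer `[m] = (1 - q^m)/(1 - q)` (for a possibly negative integer `m`),
evaluated at `q = -1`. -/
noncomputable def qintNegOne (m : ℤ) : ℚ :=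
  (1 - (-1 : ℚ) ^ m) / (1 - (-1 : ℚ))

lemma neg_one_zpow_eq (m : ℤ) : (-1 : ℚ) ^ m = if Even m then 1 else -1 := by
  rcases Int.even_or_odd m with ⟨c, hc⟩ | ⟨c, hc⟩
  · have he : Even m := ⟨c, hc⟩
    rw [if_pos he, hc, ← two_mul, zpow_mul]
    norm_num
  · have he : ¬ Even m := by
      rw [Int.not_even_iff_odd]; exact ⟨c, hc⟩
    rw [if_neg he, hc, zpow_add₀ (by norm_num : (-1:ℚ) ≠ 0), zpow_mul]
    norm_num

lemma qint_eq (m : ℤ) : qintNegOne m = if Even m then 0 else 1 := by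
  rw [qintNegOne, neg_one_zpow_eq]
  split <;> norm_num

/-- Substituting `q = -1` in
`A_{k,n}(q) = ∑_{i=0}^{k-1} (-1)^i C(n,i) q^{-(k-i)²} ([i-k]^i [k-i+1]^{n-i} - [i-k+1]^i [k-i]^{n-i})`
yields `1` for every `1 ≤ k ≤ n`; in particular `∑_{k=1}^n A_{k,n}(-1) = n`
(the Euler-characteristic statement for `Gr(k,n)⁺`). -/
theorem A_kn_at_neg_one (n k : ℕ) (hk : 1 ≤ k) (hkn : k ≤ n) :
    ∑ i ∈ Finset.range k,
      (-1 : ℚ) ^ i * (n.choose i : ℚ) * (-1 : ℚ) ^ (-(((k : ℤ) - i) ^ 2)) *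
        (qintNegOne ((i : ℤ) - k) ^ i * qintNegOne ((k : ℤ) - i + 1) ^ (n - i) -
          qintNegOne ((i : ℤ) - k + 1) ^ i * qintNegOne ((k : ℤ) - i) ^ (n - i)) = 1 := by
  rw [Finset.sum_eq_single_of_mem 0 (Finset.mem_range.mpr hk)]
  · -- i = 0 term
    have hn : n ≠ 0 := by omega
    simp only [Nat.cast_zero, Nat.choose_zero_right, Nat.cast_one, pow_zero,
      Nat.sub_zero, one_mul, mul_one, sub_zero]
    rw [neg_one_zpow_eq, qint_eq, qint_eq]
    have hsq : Even (-((k:ℤ) ^ 2)) ↔ Even (k:ℤ) := by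
      rw [even_neg, Int.even_pow]; simp
    rcases Int.even_or_odd (k:ℤ) with h | h
    · rw [if_pos (hsq.mpr h), if_neg (by simp [Int.even_add_one, h, (Int.even_coe_nat k).mp h]), if_pos h]
      simp [zero_pow hn]
    · have he := Int.not_even_iff_odd.mpr h
      rw [if_neg (by simp [hsq, he]), if_pos (by simp [Int.even_add_one, he, (Int.odd_coe_nat k).mp h]), if_neg he]
      simp [zero_pow hn]
  · -- other terms vanish
    intro b hb hb0
    have hbk : b < k := Finset.mem_range.mp hb
    have hnb : n - b ≠ 0 := by omega
    have hpar : Even ((b:ℤ) - k) ↔ Even ((k:ℤ) - b) := by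
      constructor <;> intro hx <;> simpa [neg_sub] using hx.neg
    rcases Int.even_or_odd ((k:ℤ) - b) with h | h
    · have h1 : Even ((b:ℤ) - k) := hpar.mpr h
      have h2 : ¬ Even ((b:ℤ) - k + 1) := by simp [Int.even_add_one, h1]
      have h3 : ¬ Even ((k:ℤ) - b + 1) := by simp [Int.even_add_one, h]
      simp [qint_eq, h, h1, h2, h3, zero_pow hb0, zero_pow hnb]
    · have he := Int.not_even_iff_odd.mpr h
      have h1 : ¬ Even ((b:ℤ) - k) := fun hx => he (hpar.mp hx)
      have h2 : Even ((b:ℤ) - k + 1) := by simp [Int.even_add_one, h1, Int.not_even_iff_odd.mp h1]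
      have h3 : Even ((k:ℤ) - b + 1) := by simp [Int.even_add_one, he, h]
      simp [qint_eq, he, h1, h2, h3, zero_pow hb0, zero_pow hnb]
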